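/- arXiv:1607.00138 — 5 statements merged into one kernel-verified Lean document; each statement's English description precedes it below -/
import Mathlib

section
/- Let f : Σ^m → ℕ be a cost function and g : Σ^m → {1,…,m} a shift function, and let D be the DAA encoding (f,g) with start window S. Then for every n ≥ 0 and every text T ∈ Σ^n, value_D(T) equals the total cost of the window-based pattern matching algorithm specified by (f,g) on T. -/
/-- The longest suffix of `a` satisfying `p` (default `[]` if no suffix satisfies `p`). -/
def longestSuffixP {A : Type*} (p : List A → Prop) [DecidablePred p] (a : List A) : List A :=
  (a.tails.filter fun t => decide (p t)).headD []

/-- Run of a DAA with additive natural-number values: from a state/value pair,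
read the text character by character; on entering a state, add its emission. -/
def daaRun {A Q : Type*} (step : Q → A → Q) (emit : Q → ℕ) : Q × ℕ → List A → Q × ℕ
  | s, [] => s
  | (q, v), σ :: x => daaRun step emit (step q σ, v + emit (step q σ)) x

/-- Transition of the (full) DAA encoding a window-based algorithm with shift `g`:
states are pairs (window, count-down `k`); on reading `σ` in state `(w,k)` move to
`(w₁…w_{m-1}σ, k-1)` if `k > 0` and to `(w₁…w_{m-1}σ, g(w)-1)` if `k = 0`. -/
def fullStep {A : Type*} (g : List A → ℕ) : (List A × ℕ) → A → (List A × ℕ) :=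
  fun s σ => (s.1.tail ++ [σ], if 0 < s.2 then s.2 - 1 else g s.1 - 1)

/-- Emission of the (full) DAA encoding a window-based algorithm with cost `f`:
on entering `(w',k')`, add `f(w')` if `k' = 0` and `0` otherwise. -/
def fullEmit {A : Type*} (f : List A → ℕ) : (List A × ℕ) → ℕ :=
  fun s => if s.2 = 0 then f s.1 else 0

/-- `value_D(T)` for the DAA `D` encoding `(f,g)` with start state `(S,m)` and start value `0`. -/
def valueD {A : Type*} (f g : List A → ℕ) (S : List A) (m : ℕ) (T : List A) : ℕ :=
  (daaRun (fullStep g) (fullEmit f) ((S, m), 0) T).2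

/-- Total cost of the window-based algorithm `(f,g)` (auxiliary, fuelled version):
from window position `p`, as long as `p + m ≤ |T|`, pay `f` on the current window
`t_p … t_{p+m-1}` and shift by `g` of it. (Since shifts are ≥ 1, fuel `|T| + 1`
suffices to visit all window positions.) -/
def totalCostAux {A : Type*} (f g : List A → ℕ) (m : ℕ) (T : List A) : ℕ → ℕ → ℕ
  | 0, _ => 0
  | fuel + 1, p =>
    if p + m ≤ T.length then
      f ((T.drop p).take m) + totalCostAux f g m T fuel (p + g ((T.drop p).take m))
    else 0

/-- Total cost (number of text character accesses) of the window-based pattern matching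
algorithm specified by cost `f` and shift `g` on text `T` (window length `m`),
starting at window position `0`. -/
def totalCost {A : Type*} (f g : List A → ℕ) (m : ℕ) (T : List A) : ℕ :=
  totalCostAux f g m T (T.length + 1) 0

section
variable {A : Type*} (f g : List A → ℕ) (m : ℕ)

lemma totalCostAux_unfold (T : List A) (fuel p : ℕ) :
    totalCostAux f g m T (fuel + 1) p =
      if p + m ≤ T.length then
        f ((T.drop p).take m) + totalCostAux f g m T fuel (p + g ((T.drop p).take m))
      else 0 := rfl

lemma totalCostAux_succ (T : List A) (fuel p : ℕ)
    (hg : ∀ w : List A, w.length = m → 1 ≤ g w)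
    (hcond : T.length + 1 ≤ p + m + fuel) :
    totalCostAux f g m T fuel p = totalCostAux f g m T (fuel + 1) p := by
  induction fuel generalizing p with
  | zero =>
    rw [totalCostAux_unfold, if_neg (by omega)]
    rfl
  | succ k ih =>
    rw [totalCostAux_unfold, totalCostAux_unfold]
    by_cases h : p + m ≤ T.length
    · rw [if_pos h, if_pos h]
      have hw := hg ((T.drop p).take m) (by
        rw [List.length_take, List.length_drop]; omega)
      rw [ih _ (by omega)]
    · rw [if_neg h, if_neg h]

lemma totalCostAux_fuel (T : List A) (fuel₁ fuel₂ p : ℕ)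
    (hg : ∀ w : List A, w.length = m → 1 ≤ g w)
    (h1 : T.length + 1 ≤ p + m + fuel₁) (h2 : T.length + 1 ≤ p + m + fuel₂) :
    totalCostAux f g m T fuel₁ p = totalCostAux f g m T fuel₂ p := by
  have key : ∀ fuel k p, T.length + 1 ≤ p + m + fuel →
      totalCostAux f g m T fuel p = totalCostAux f g m T (fuel + k) p := by
    intro fuel k p hp
    induction k with
    | zero => rfl
    | succ j ih =>
      have e : fuel + (j + 1) = fuel + j + 1 := by omega
      rw [ih, totalCostAux_succ f g m T (fuel + j) p hg (by omega), e]
  rcases le_total fuel₁ fuel₂ with h | h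
  · rw [key fuel₁ (fuel₂ - fuel₁) p h1]; congr 1; omega
  · rw [key fuel₂ (fuel₁ - fuel₂) p h2]; congr 1; omega

lemma totalCostAux_drop (hm : 1 ≤ m) (T : List A) (s : ℕ) (fuel p : ℕ) :
    totalCostAux f g m (T.drop s) fuel p = totalCostAux f g m T fuel (p + s) := by
  induction fuel generalizing p with
  | zero => rfl
  | succ k ih =>
    have hd : (T.drop s).drop p = T.drop (p + s) := by
      rw [List.drop_drop, Nat.add_comm]
    rw [totalCostAux_unfold, totalCostAux_unfold, hd, List.length_drop]
    by_cases h : p + s + m ≤ T.length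
    · rw [if_pos (by omega), if_pos h, ih, Nat.add_right_comm p _ s]
    · rw [if_neg (by omega), if_neg h]

lemma daaRun_reset (w : List A) (v : ℕ) (R : List A) (h : 1 ≤ g w) :
    (daaRun (fullStep g) (fullEmit f) ((w, 0), v) R).2
      = (daaRun (fullStep g) (fullEmit f) ((w, g w), v) R).2 := by
  cases R with
  | nil => rfl
  | cons σ x =>
    show (daaRun _ _ (fullStep g (w, 0) σ, _) x).2 = (daaRun _ _ (fullStep g (w, g w) σ, _) x).2
    have hs : fullStep g (w, 0) σ = fullStep g (w, g w) σ := by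
      simp only [fullStep]
      rw [if_neg (by omega), if_pos (by omega)]
    rw [hs]

lemma daaRun_main (hm : 1 ≤ m)
    (hg : ∀ w : List A, w.length = m → 1 ≤ g w ∧ g w ≤ m)
    (R : List A) : ∀ (u : List A) (c v : ℕ), u.length = m → 1 ≤ c → c ≤ m →
    (daaRun (fullStep g) (fullEmit f) ((u, c), v) R).2
      = v + totalCostAux f g m (u.drop c ++ R) (R.length + 1) 0 := by
  have hg1 : ∀ w : List A, w.length = m → 1 ≤ g w := fun w hw => (hg w hw).1
  induction R with
  | nil =>
    intro u c v hu hc1 hcm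
    have hlen : (u.drop c ++ ([] : List A)).length = m - c := by
      simp [hu]
    show v = v + totalCostAux f g m (u.drop c ++ []) (0 + 1) 0
    rw [totalCostAux_unfold, if_neg (by omega)]
    omega
  | cons σ R ih =>
    intro u c v hu hc1 hcm
    have hstep : fullStep g (u, c) σ = (u.tail ++ [σ], c - 1) := by
      simp only [fullStep]
      rw [if_pos (by omega)]
    have hw0 : (u.tail ++ [σ]).length = m := by
      simp [hu]; omega
    show (daaRun (fullStep g) (fullEmit f)
        (fullStep g (u, c) σ, v + fullEmit f (fullStep g (u, c) σ)) R).2 = _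
    rw [hstep]
    rcases Nat.lt_or_ge 1 c with hc2 | hc2
    · -- countdown case: c ≥ 2
      have hemit : fullEmit f (u.tail ++ [σ], c - 1) = 0 := by
        simp only [fullEmit]
        rw [if_neg (by omega)]
      rw [hemit]
      rw [ih (u.tail ++ [σ]) (c - 1) (v + 0) hw0 (by omega) (by omega)]
      have hlist : (u.tail ++ [σ]).drop (c - 1) ++ R = u.drop c ++ σ :: R := by
        rw [List.drop_append]
        have h1 : u.tail.drop (c - 1) = u.drop c := by
          rw [← List.drop_one, List.drop_drop]
          congr 1; omega
        have h2 : (c - 1) - u.tail.length = 0 := by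
          rw [List.length_tail, hu]; omega
        rw [h1, h2, List.drop_zero, List.append_assoc, List.singleton_append]
      rw [hlist]
      have hlen : (u.drop c ++ σ :: R).length = m - c + (R.length + 1) := by
        simp [hu]
      rw [totalCostAux_fuel f g m (u.drop c ++ σ :: R) (R.length + 1)
        ((σ :: R).length + 1) 0 hg1 (by rw [hlen]; omega)
        (by rw [hlen]; simp; omega)]
      omega
    · -- emission case: c = 1
      have hc : c = 1 := by omega
      subst hc
      set w0 := u.tail ++ [σ] with hw0def
      have hemit : fullEmit f (w0, 1 - 1) = f w0 := by
        simp [fullEmit]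
      rw [hemit]
      have hs := hg w0 hw0
      have hgen : ∀ (l r : List A) (n : ℕ), n ≤ l.length →
          (l ++ r).drop n = l.drop n ++ r := by
        intro l r n h
        rw [List.drop_append, Nat.sub_eq_zero_of_le h, List.drop_zero]
      have hdrop : (w0 ++ R).drop (g w0) = w0.drop (g w0) ++ R :=
        hgen w0 R (g w0) (by rw [hw0]; exact hs.2)
      have hlen : (w0 ++ R).length = m + R.length := by simp [hw0]
      have htake : ((w0 ++ R).drop 0).take m = w0 := by
        rw [List.drop_zero, ← hw0, List.take_left]
      rw [show (1 : ℕ) - 1 = 0 from rfl, daaRun_reset f g w0 _ R hs.1]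
      rw [ih w0 (g w0) (v + f w0) hw0 hs.1 hs.2]
      rw [← hdrop, totalCostAux_drop f g m hm (w0 ++ R) (g w0) (R.length + 1) 0]
      have hlist : u.drop 1 ++ σ :: R = w0 ++ R := by
        rw [hw0def, List.append_assoc, List.singleton_append, List.drop_one]
      rw [hlist]
      rw [show (σ :: R).length + 1 = (R.length + 1) + 1 from by simp]
      rw [totalCostAux_unfold f g m (w0 ++ R) (R.length + 1) 0,
        if_pos (show 0 + m ≤ (w0 ++ R).length by rw [hlen]; omega)]
      rw [htake]
      omega

end

/-- Let `f : Σ^m → ℕ` be a cost function and `g : Σ^m → {1,…,m}` a shift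
function, and let `D` be the DAA encoding `(f,g)` with start window `S`. Then for every text
`T ∈ Σ*`, `value_D(T)` equals the total cost of the window-based pattern matching algorithm
specified by `(f,g)` on `T`. -/
theorem daa_value_eq_totalCost {A : Type*} [Fintype A] [DecidableEq A] [Nonempty A]
    (m : ℕ) (hm : 1 ≤ m) (S : List A) (hS : S.length = m)
    (f g : List A → ℕ)
    (hg : ∀ w : List A, w.length = m → 1 ≤ g w ∧ g w ≤ m)
    (T : List A) :
    valueD f g S m T = totalCost f g m T := by
  have h := daaRun_main f g m hm hg T S m 0 hS hm le_rfl
  rw [valueD, h, ← hS, List.drop_length, List.nil_append, hS, Nat.zero_add]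
  rfl
end

section
/- Let f : Σ^m → ℕ, g : Σ^m → {1,…,m}, let D be the DAA encoding (f,g) with start window S, and let R be a set of window representatives of length m that is compatible with (f,g), with transition function δ_R. Let D' be the reduced DAA built from R, δ_R, f and g. Then value_D(T) = value_{D'}(T) for every n ≥ 0 and every T ∈ Σ^n. -/
/-- Transition of the reduced DAA built from a representatives transition `δR` and lifted
shift `gR`: on reading `σ` in state `(r,k)` move to `(δR(r,σ), k-1)` if `k > 0` and to
`(δR(r,σ), gR(r)-1)` if `k = 0`. -/
def redStep {A : Type*} (δR : List A → A → List A) (gR : List A → ℕ) :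
    (List A × ℕ) → A → (List A × ℕ) :=
  fun s σ => (δR s.1 σ, if 0 < s.2 then s.2 - 1 else gR s.1 - 1)

/-- Emission of the reduced DAA with lifted cost `fR`: on entering `(r',k')`, add
`fR(r')` if `k' = 0` and `0` otherwise. -/
def redEmit {A : Type*} (fR : List A → ℕ) : (List A × ℕ) → ℕ :=
  fun s => if s.2 = 0 then fR s.1 else 0

/-- `rep_R(a)`: the longest suffix of `a` lying in the finite set `R`. -/
def repR {A : Type*} [DecidableEq A] (R : Finset (List A)) (a : List A) : List A :=
  longestSuffixP (· ∈ R) a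

/-- Let `f : Σ^m → ℕ`, `g : Σ^m → {1,…,m}`, let `D` be the DAA encoding
`(f,g)` with start window `S`, and let `R` be a set of window representatives of length `m`
that is compatible with `(f,g)`, with transition function `δR`. Let `D'` be the reduced DAA
built from `R`, `δR` and (the liftings `fR`, `gR` to representatives of) `f` and `g`.
Then `value_D(T) = value_{D'}(T)` for every text `T ∈ Σ*`. -/
theorem daa_value_eq_reduced_value {A : Type*} [Fintype A] [DecidableEq A] [Nonempty A]
    (m : ℕ) (hm : 1 ≤ m) (S : List A) (hS : S.length = m)
    (f g : List A → ℕ)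
    (hg : ∀ w : List A, w.length = m → 1 ≤ g w ∧ g w ≤ m)
    (R : Finset (List A))
    -- (1) every word of length m has a suffix in R, so rep_R is well-defined
    (hR1 : ∀ a : List A, a.length = m → ∃ t, t <:+ a ∧ t ∈ R)
    -- (2) a transition function δR : R × Σ → R compatible with rep_R
    (δR : List A → A → List A)
    (hδR_mem : ∀ r ∈ R, ∀ σ : A, δR r σ ∈ R)
    (hδR : ∀ a : List A, a.length = m → ∀ σ : A,
      δR (repR R a) σ = repR R (a.tail ++ [σ]))
    -- compatibility of R with (f,g)
    (hcompat : ∀ a a' : List A, a.length = m → a'.length = m →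
      repR R a = repR R a' → f a = f a' ∧ g a = g a')
    -- liftings of f and g to representatives (their values on representatives not of the
    -- form rep_R(a) are immaterial)
    (fR gR : List A → ℕ)
    (hfR : ∀ a : List A, a.length = m → fR (repR R a) = f a)
    (hgR : ∀ a : List A, a.length = m → gR (repR R a) = g a)
    (T : List A) :
    valueD f g S m T
      = (daaRun (redStep δR gR) (redEmit fR) ((repR R S, m), 0) T).2 := by
  have key : ∀ (T : List A) (w : List A), w.length = m → ∀ (k v : ℕ),
      (daaRun (fullStep g) (fullEmit f) ((w, k), v) T).2
        = (daaRun (redStep δR gR) (redEmit fR) ((repR R w, k), v) T).2 := by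
    intro T
    induction T with
    | nil => intro w hw k v; rfl
    | cons σ x ih =>
      intro w hw k v
      have hw' : (w.tail ++ [σ]).length = m := by
        simp [List.length_tail, hw]
        omega
      have hk : (if 0 < k then k - 1 else gR (repR R w) - 1)
          = (if 0 < k then k - 1 else g w - 1) := by
        rw [hgR w hw]
      have hstep : δR (repR R w) σ = repR R (w.tail ++ [σ]) := hδR w hw σ
      have hemit : redEmit fR (redStep δR gR (repR R w, k) σ)
          = fullEmit f (fullStep g (w, k) σ) := by
        simp only [redEmit, redStep, fullEmit, fullStep, hstep, hk]
        split <;> simp_all [hfR _ hw']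
      simp only [daaRun, fullStep, redStep, hstep, hk]
      rw [ih (w.tail ++ [σ]) hw']
      congr 2
      split <;> simp [fullEmit, redEmit, hfR _ hw']
  exact key T S hS m 0
end

section
/- Let f : Σ^m → ℕ, g : Σ^m → {1,…,m}, let D be the DAA encoding (f,g) with start window S, and let R be a set of window representatives of length m compatible with (f,g), with transition function δ_R, and D' the reduced DAA. For every T ∈ Σ*: if reading T from the start configuration of D yields state (w,k) with value v, and reading T from the start configuration of D' yields state (r,k') with value v', then v = v', k = k', and r = rep_R(w). -/
/-- With `D` the DAA encoding `(f,g)` with start window `S` and `D'` the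
reduced DAA built from a compatible set of window representatives `R` with transition `δR`:
for every text `T`, if reading `T` from the start configuration of `D` yields state `(w,k)`
with value `v`, and reading `T` from the start configuration of `D'` yields state `(r,k')`
with value `v'`, then `v = v'`, `k = k'`, and `r = rep_R(w)`. -/
theorem daa_reduced_invariant {A : Type*} [Fintype A] [DecidableEq A] [Nonempty A]
    (m : ℕ) (hm : 1 ≤ m) (S : List A) (hS : S.length = m)
    (f g : List A → ℕ)
    (hg : ∀ w : List A, w.length = m → 1 ≤ g w ∧ g w ≤ m)
    (R : Finset (List A))
    -- (1) every word of length m has a suffix in R, so rep_R is well-defined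
    (hR1 : ∀ a : List A, a.length = m → ∃ t, t <:+ a ∧ t ∈ R)
    -- (2) a transition function δR : R × Σ → R compatible with rep_R
    (δR : List A → A → List A)
    (hδR_mem : ∀ r ∈ R, ∀ σ : A, δR r σ ∈ R)
    (hδR : ∀ a : List A, a.length = m → ∀ σ : A,
      δR (repR R a) σ = repR R (a.tail ++ [σ]))
    -- compatibility of R with (f,g)
    (hcompat : ∀ a a' : List A, a.length = m → a'.length = m →
      repR R a = repR R a' → f a = f a' ∧ g a = g a')
    -- liftings of f and g to representatives
    (fR gR : List A → ℕ)
    (hfR : ∀ a : List A, a.length = m → fR (repR R a) = f a)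
    (hgR : ∀ a : List A, a.length = m → gR (repR R a) = g a)
    (T : List A) :
    (daaRun (fullStep g) (fullEmit f) ((S, m), 0) T).2
        = (daaRun (redStep δR gR) (redEmit fR) ((repR R S, m), 0) T).2
    ∧ (daaRun (fullStep g) (fullEmit f) ((S, m), 0) T).1.2
        = (daaRun (redStep δR gR) (redEmit fR) ((repR R S, m), 0) T).1.2
    ∧ (daaRun (redStep δR gR) (redEmit fR) ((repR R S, m), 0) T).1.1
        = repR R (daaRun (fullStep g) (fullEmit f) ((S, m), 0) T).1.1 := by
  suffices h : ∀ (T : List A) (w : List A) (k v : ℕ), w.length = m →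
      (daaRun (fullStep g) (fullEmit f) ((w, k), v) T).2
          = (daaRun (redStep δR gR) (redEmit fR) ((repR R w, k), v) T).2
      ∧ (daaRun (fullStep g) (fullEmit f) ((w, k), v) T).1.2
          = (daaRun (redStep δR gR) (redEmit fR) ((repR R w, k), v) T).1.2
      ∧ (daaRun (redStep δR gR) (redEmit fR) ((repR R w, k), v) T).1.1
          = repR R (daaRun (fullStep g) (fullEmit f) ((w, k), v) T).1.1 by
    exact h T S m 0 hS
  intro T
  induction T with
  | nil => intro w k v hw; exact ⟨rfl, rfl, rfl⟩
  | cons σ T ih =>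
    intro w k v hw
    have hw' : (w.tail ++ [σ]).length = m := by
      simp [List.length_tail, hw]
      omega
    have hk : (if 0 < k then k - 1 else g w - 1)
        = (if 0 < k then k - 1 else gR (repR R w) - 1) := by
      rw [hgR w hw]
    have hem : fullEmit f (w.tail ++ [σ], if 0 < k then k - 1 else g w - 1)
        = redEmit fR (repR R (w.tail ++ [σ]), if 0 < k then k - 1 else g w - 1) := by
      simp only [fullEmit, redEmit, hfR _ hw']
    simp only [daaRun, fullStep, redStep, hδR w hw σ, ← hk, hem]
    exact ih (w.tail ++ [σ]) _ _ hw'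
end

section
/- For every pattern S ∈ Σ^m, the set subcl(S) is a set of window representatives of length m; explicitly: (1) every a ∈ Σ^m has a suffix lying in subcl(S), so rep_{subcl(S)}(a) is well-defined; and (2) the function δ(r,σ) := (the longest suffix of rσ that lies in subcl(S)) maps subcl(S) × Σ into subcl(S) and satisfies δ(rep_{subcl(S)}(a), σ) = rep_{subcl(S)}(a_1…a_{m−1}σ) for all a ∈ Σ^m and σ ∈ Σ. -/
/-- `rep_{subcl(S)}(a)`: the longest suffix of `a` lying in `subcl(S)`, the set of all
contiguous substrings of `S` (including the empty string), i.e. the longest suffix of `a`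
that is an infix of `S`. -/
def repSub {A : Type*} [DecidableEq A] (S : List A) (a : List A) : List A :=
  longestSuffixP (· <:+: S) a

lemma longestSuffixP_nil {A : Type*} (p : List A → Prop) [DecidablePred p] :
    longestSuffixP p [] = [] := by
  unfold longestSuffixP
  by_cases h : p [] <;> simp [h]

lemma longestSuffixP_cons {A : Type*} (p : List A → Prop) [DecidablePred p] (x : A)
    (a : List A) :
    longestSuffixP p (x :: a) = if p (x :: a) then x :: a else longestSuffixP p a := by
  unfold longestSuffixP
  rw [List.tails_cons, List.filter_cons]
  by_cases h : p (x :: a) <;> simp [h]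

lemma longestSuffixP_suffix {A : Type*} (p : List A → Prop) [DecidablePred p] (a : List A) :
    longestSuffixP p a <:+ a := by
  induction a with
  | nil => rw [longestSuffixP_nil]
  | cons x a ih =>
    rw [longestSuffixP_cons]
    split_ifs with h
    · exact List.suffix_rfl
    · exact ih.trans (List.suffix_cons x a)

lemma longestSuffixP_prop {A : Type*} (p : List A → Prop) [DecidablePred p] (hp : p [])
    (a : List A) : p (longestSuffixP p a) := by
  induction a with
  | nil => rw [longestSuffixP_nil]; exact hp
  | cons x a ih =>
    rw [longestSuffixP_cons]
    split_ifs with h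
    · exact h
    · exact ih

lemma suffix_longestSuffixP {A : Type*} (p : List A → Prop) [DecidablePred p] {a t : List A}
    (ht : t <:+ a) (hpt : p t) : t <:+ longestSuffixP p a := by
  induction a with
  | nil =>
    rw [longestSuffixP_nil]
    rw [List.suffix_nil] at ht
    subst ht
    exact List.suffix_rfl
  | cons x a ih =>
    rw [longestSuffixP_cons]
    rcases List.suffix_cons_iff.mp ht with rfl | ht'
    · simp [hpt]
    · split_ifs with h
      · exact ht'.trans (List.suffix_cons x a)
      · exact ih ht'

lemma repSub_suffix {A : Type*} [DecidableEq A] (S a : List A) : repSub S a <:+ a :=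
  longestSuffixP_suffix _ a

lemma repSub_infix {A : Type*} [DecidableEq A] (S a : List A) : repSub S a <:+: S :=
  longestSuffixP_prop (· <:+: S) List.nil_infix a

lemma suffix_repSub {A : Type*} [DecidableEq A] {S a t : List A} (ht : t <:+ a)
    (hi : t <:+: S) : t <:+ repSub S a :=
  suffix_longestSuffixP _ ht hi

/-- Any suffix of `x ++ [σ]` is either `[]` or `u ++ [σ]` for a suffix `u` of `x`. -/
lemma suffix_append_same {A : Type*} {u v : List A} (w : List A) (h : u <:+ v) :
    u ++ w <:+ v ++ w := by
  obtain ⟨s, rfl⟩ := h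
  exact ⟨s, by simp⟩

lemma suffix_concat_cases {A : Type*} {x t : List A} {σ : A} (ht : t <:+ x ++ [σ]) :
    t = [] ∨ ∃ u, u <:+ x ∧ t = u ++ [σ] := by
  rcases List.eq_nil_or_concat t with rfl | ⟨u, b, rfl⟩
  · exact Or.inl rfl
  · right
    obtain ⟨s, hs⟩ := ht
    rw [List.concat_eq_append, ← List.append_assoc] at hs
    obtain ⟨h1, h2⟩ := List.append_inj' hs rfl
    obtain rfl : b = σ := by simpa using h2
    exact ⟨u, ⟨s, h1⟩, by simp⟩

/-- A suffix of `a` shorter than `a` is a suffix of `a.tail`. -/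
lemma suffix_tail_of_lt {A : Type*} {a u : List A} (hu : u <:+ a)
    (hl : u.length < a.length) : u <:+ a.tail := by
  obtain ⟨s, rfl⟩ := hu
  rcases s with _ | ⟨c, s'⟩
  · simp at hl
  · exact ⟨s', by simp⟩

/-- For every pattern `S ∈ Σ^m`, the set `subcl(S)` of contiguous substrings
of `S` (including `ε`) is a set of window representatives of length `m`. -/
theorem subcl_is_window_representatives {A : Type*} [Fintype A] [DecidableEq A] [Nonempty A]
    (m : ℕ) (hm : 1 ≤ m) (S : List A) (hS : S.length = m) :
    (∀ a : List A, a.length = m → ∃ t, t <:+ a ∧ t <:+: S)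
    ∧ (∀ r : List A, r <:+: S → ∀ σ : A, repSub S (r ++ [σ]) <:+: S)
    ∧ (∀ a : List A, a.length = m → ∀ σ : A,
        repSub S (repSub S a ++ [σ]) = repSub S (a.tail ++ [σ])) := by
  refine ⟨fun a _ => ⟨[], List.nil_suffix, List.nil_infix⟩,
    fun r _ σ => repSub_infix S _, fun a ha σ => ?_⟩
  set r := repSub S a with hr
  -- each side is a suffix of the other
  have key1 : repSub S (r ++ [σ]) <:+ repSub S (a.tail ++ [σ]) := by
    rcases suffix_concat_cases (repSub_suffix S (r ++ [σ])) with h | ⟨u, hu, h⟩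
    · rw [h]; exact List.nil_suffix
    · have hinf : repSub S (r ++ [σ]) <:+: S := repSub_infix S _
      have hlen : u.length < a.length := by
        have := hinf.length_le
        rw [h, hS, ha] at *
        simp only [List.length_append, List.length_singleton] at this
        omega
      have hua : u <:+ a := hu.trans (repSub_suffix S a)
      have : repSub S (r ++ [σ]) <:+ a.tail ++ [σ] := by
        rw [h]
        exact suffix_append_same _ (suffix_tail_of_lt hua hlen)
      exact suffix_repSub this hinf
  have key2 : repSub S (a.tail ++ [σ]) <:+ repSub S (r ++ [σ]) := by
    rcases suffix_concat_cases (repSub_suffix S (a.tail ++ [σ])) with h | ⟨u, hu, h⟩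
    · rw [h]; exact List.nil_suffix
    · have hinf : repSub S (a.tail ++ [σ]) <:+: S := repSub_infix S _
      have hui : u <:+: S := by
        refine List.IsInfix.trans ?_ hinf
        rw [h]
        exact (List.prefix_append u [σ]).isInfix
      have hua : u <:+ a := hu.trans (List.tail_suffix a)
      have hur : u <:+ r := suffix_repSub hua hui
      have : repSub S (a.tail ++ [σ]) <:+ r ++ [σ] := by
        rw [h]; exact suffix_append_same _ hur
      exact suffix_repSub this hinf
  exact key1.eq_of_length (Nat.le_antisymm key1.length_le key2.length_le)
end

section
/- Let Q be a finite state set with start state q_0 ∈ Q, δ : Q × Σ → Q a transition function, and η : Q → ℕ an additive emission function; for x ∈ Σ^n define value(x) := Σ_{t=1}^{n} η(q_t), where q_t = δ(q_{t−1}, x_{t−1}) are the states entered while reading x from q_0. Let (C, c_0, Σ, φ) be a finite-memory text model, and define forward vectors u_t : Q × C × ℕ → ℝ by u_0(q,c,v) := 1 if (q,c,v) = (q_0,c_0,0) and 0 otherwise, and u_{t+1}(q',c',v') := Σ u_t(q,c,v)·φ(c,σ,c'), the sum being over all q ∈ Q, c ∈ C, v ∈ ℕ, σ ∈ Σ with δ(q,σ)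 = q' and v + η(q') = v'. Then for all n ≥ 0 and all v ∈ ℕ: Σ_{q ∈ Q, c ∈ C} u_n(q,c,v) = Σ_{x ∈ Σ^n with value(x) = v} P_M(x); i.e., the forward recursion computes the exact distribution of value on random texts generated by the model. -/
/-- `value(x)`: the sum of the emissions `η(q_t)` of the states `q_t = δ(q_{t−1}, x_{t−1})`
entered while reading `x` from state `q`. -/
def daaValue {A Q : Type*} (δ : Q → A → Q) (η : Q → ℕ) : Q → List A → ℕ
  | _, [] => 0
  | q, σ :: x => η (δ q σ) + daaValue δ η (δ q σ) x

section aux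
variable {A Q C : Type*}

lemma daaValue_concat (δ : Q → A → Q) (η : Q → ℕ) (q : Q) (l : List A) (σ : A) :
    daaValue δ η q (l ++ [σ]) = daaValue δ η q l + η (δ (l.foldl δ q) σ) := by
  induction l generalizing q with
  | nil => simp [daaValue]
  | cons a l ih => simp [daaValue, ih, List.foldl]; omega

noncomputable def lpAux [Fintype C] [DecidableEq C] (φ : C → A → C → ℝ) : C → List A → C → ℝ
  | c, [], c' => if c' = c then 1 else 0
  | c, σ :: l, c' => ∑ m : C, φ c σ m * lpAux φ m l c'

@[simp] lemma lpAux_nil [Fintype C] [DecidableEq C] (φ : C → A → C → ℝ) (c c' : C) :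
    lpAux φ c [] c' = if c' = c then 1 else 0 := rfl

@[simp] lemma lpAux_cons [Fintype C] [DecidableEq C] (φ : C → A → C → ℝ) (c c' : C)
    (σ : A) (l : List A) :
    lpAux φ c (σ :: l) c' = ∑ m : C, φ c σ m * lpAux φ m l c' := rfl

lemma lpAux_concat [Fintype C] [DecidableEq C] (φ : C → A → C → ℝ) (c : C) (l : List A) (σ : A) (c' : C) :
    lpAux φ c (l ++ [σ]) c' = ∑ m : C, lpAux φ c l m * φ m σ c' := by
  induction l generalizing c with
  | nil => simp [lpAux]
  | cons a l ih =>
      simp only [List.cons_append, lpAux_cons, ih, Finset.mul_sum, Finset.sum_mul, mul_assoc]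
      rw [Finset.sum_comm]

lemma sum_snoc {M : Type*} [AddCommMonoid M] [Fintype A] {n : ℕ}
    (f : (Fin (n+1) → A) → M) :
    ∑ x : Fin (n+1) → A, f x = ∑ y : Fin n → A, ∑ σ : A, f (Fin.snoc y σ) := by
  rw [← Equiv.sum_comp (⟨fun p => Fin.snoc p.1 p.2, fun x => (Fin.init x, x (Fin.last n)),
    fun p => by simp, fun x => by simp⟩ : (Fin n → A) × A ≃ (Fin (n+1) → A)) f,
    Fintype.sum_prod_type]
  rfl

lemma ofFn_snoc [Fintype A] {n : ℕ} (y : Fin n → A) (σ : A) :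
    List.ofFn (Fin.snoc y σ : Fin (n+1) → A) = List.ofFn y ++ [σ] := by
  rw [List.ofFn_succ']
  simp [Fin.snoc_castSucc, List.concat_eq_append, Fin.snoc_last]

end aux


/-- `P_M(x)`: the probability that the finite-memory text model `(C, c₀, Σ, φ)` generates the
text `x = x_0…x_{n−1}`, namely `Σ_{c_1,…,c_n ∈ C} Π_{t=0}^{n−1} φ(c_t, x_t, c_{t+1})`. -/
noncomputable def textProb {A C : Type*} [Fintype C] (φ : C → A → C → ℝ) (c0 : C)
    {n : ℕ} (x : Fin n → A) : ℝ :=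
  ∑ cs : Fin n → C, ∏ t : Fin n, φ ((Fin.cons c0 cs : Fin (n + 1) → C) t.castSucc) (x t) (cs t)

section aux2
variable {A Q C : Type*}

lemma textProb_succ [Fintype C] (φ : C → A → C → ℝ) (c0 : C) {n : ℕ}
    (x : Fin (n+1) → A) :
    textProb φ c0 x = ∑ m : C, φ c0 (x 0) m * textProb φ m (Fin.tail x) := by
  rw [textProb, ← Equiv.sum_comp (⟨fun p => Fin.cons p.1 p.2, fun cs => (cs 0, Fin.tail cs),
    fun p => by simp, fun cs => by simp⟩ : C × (Fin n → C) ≃ (Fin (n+1) → C)),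
    Fintype.sum_prod_type]
  simp only [Equiv.coe_fn_mk, textProb, Finset.mul_sum]
  refine Finset.sum_congr rfl fun m _ => ?_
  refine Finset.sum_congr rfl fun cs _ => ?_
  rw [Fin.prod_univ_succ]
  have h0 : (Fin.cons c0 (Fin.cons m cs : Fin (n+1) → C) : Fin (n+2) → C)
      ((0 : Fin (n+1)).castSucc) = c0 := by simp
  rw [h0, Fin.cons_zero]
  congr 1

lemma textProb_eq_lpAux [Fintype C] [DecidableEq C] (φ : C → A → C → ℝ) :
    ∀ {n : ℕ} (c0 : C) (x : Fin n → A),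
      textProb φ c0 x = ∑ c' : C, lpAux φ c0 (List.ofFn x) c' := by
  intro n
  induction n with
  | zero => intro c0 x; simp [textProb]
  | succ n ih =>
      intro c0 x
      rw [textProb_succ, List.ofFn_succ]
      simp only [lpAux_cons, ih, Finset.mul_sum]
      rw [Finset.sum_comm]
      rfl

end aux2

/-- The forward vectors `u_t : Q × C × ℕ → ℝ`: `u_0(q,c,v) = 1` iff `(q,c,v) = (q₀,c₀,0)`,
and `u_{t+1}(q',c',v') = Σ u_t(q,c,v)·φ(c,σ,c')`, the sum being over all `q,c,v,σ` with
`δ(q,σ) = q'` and `v + η(q') = v'` (such a `v` exists iff `η(q') ≤ v'`, and then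
`v = v' − η(q')`). -/
noncomputable def fwd {A Q C : Type*} [Fintype A] [Fintype Q] [Fintype C]
    [DecidableEq Q] [DecidableEq C]
    (δ : Q → A → Q) (η : Q → ℕ) (φ : C → A → C → ℝ) (q0 : Q) (c0 : C) :
    ℕ → Q → C → ℕ → ℝ
  | 0 => fun q c v => if q = q0 ∧ c = c0 ∧ v = 0 then 1 else 0
  | t + 1 => fun q' c' v' =>
      ∑ q : Q, ∑ c : C, ∑ σ : A,
        if δ q σ = q' ∧ η q' ≤ v' then
          fwd δ η φ q0 c0 t q c (v' - η q') * φ c σ c'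
        else 0

section aux3
variable {A Q C : Type*}

lemma ite_sum_mul {P : Prop} [Decidable P] {ι : Type*} [Fintype ι] (f : ι → ℝ)
    (Qy : ι → Prop) [∀ y, Decidable (Qy y)] (b : ℝ) :
    (if P then (∑ y : ι, if Qy y then f y else 0) * b else 0)
      = ∑ y : ι, if P ∧ Qy y then f y * b else 0 := by
  split_ifs with h
  · rw [Finset.sum_mul]
    exact Finset.sum_congr rfl fun y _ => by by_cases hq : Qy y <;> simp [hq, h]
  · exact (Finset.sum_eq_zero fun y _ => by simp [h]).symm

lemma fwd_eq [Fintype A] [Fintype Q] [Fintype C] [DecidableEq Q] [DecidableEq C]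
    (δ : Q → A → Q) (η : Q → ℕ) (φ : C → A → C → ℝ) (q0 : Q) (c0 : C) :
    ∀ (n : ℕ) (q' : Q) (c' : C) (v' : ℕ),
      fwd δ η φ q0 c0 n q' c' v' =
        ∑ x : Fin n → A,
          if (List.ofFn x).foldl δ q0 = q' ∧ daaValue δ η q0 (List.ofFn x) = v'
          then lpAux φ c0 (List.ofFn x) c' else 0 := by
  intro n
  induction n with
  | zero =>
      intro q' c' v'
      rw [show fwd δ η φ q0 c0 0 q' c' v'
            = if q' = q0 ∧ c' = c0 ∧ v' = 0 then 1 else 0 from rfl]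
      rw [Fintype.sum_eq_single (α := Fin 0 → A) (fun i => i.elim0)
        (fun x hx => absurd (funext fun i => i.elim0) hx)]
      simp only [List.ofFn_zero, List.foldl_nil, daaValue, lpAux_nil]
      split_ifs <;> simp_all <;> tauto
  | succ n ih =>
      intro q' c' v'
      rw [show fwd δ η φ q0 c0 (n+1) q' c' v'
            = ∑ q : Q, ∑ c : C, ∑ σ : A,
                if δ q σ = q' ∧ η q' ≤ v' then
                  fwd δ η φ q0 c0 n q c (v' - η q') * φ c σ c'
                else 0 from rfl]
      simp only [ih]
      -- push the ite and the multiplication inside the sum over y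
      have step1 : ∀ q c σ,
          (if δ q σ = q' ∧ η q' ≤ v' then
              (∑ y : Fin n → A,
                if (List.ofFn y).foldl δ q0 = q ∧ daaValue δ η q0 (List.ofFn y) = v' - η q'
                then lpAux φ c0 (List.ofFn y) c else 0) * φ c σ c'
            else 0)
          = ∑ y : Fin n → A,
              if (δ q σ = q' ∧ η q' ≤ v') ∧
                  ((List.ofFn y).foldl δ q0 = q ∧ daaValue δ η q0 (List.ofFn y) = v' - η q')
              then lpAux φ c0 (List.ofFn y) c * φ c σ c' else 0 :=
        fun q c σ => ite_sum_mul _ _ _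
      simp only [step1]
      -- set T
      set T : Q → C → A → (Fin n → A) → ℝ := fun q c σ y =>
        if (δ q σ = q' ∧ η q' ≤ v') ∧
            ((List.ofFn y).foldl δ q0 = q ∧ daaValue δ η q0 (List.ofFn y) = v' - η q')
        then lpAux φ c0 (List.ofFn y) c * φ c σ c' else 0 with hT
      calc ∑ q : Q, ∑ c : C, ∑ σ : A, ∑ y : Fin n → A, T q c σ y
          = ∑ q : Q, ∑ c : C, ∑ y : Fin n → A, ∑ σ : A, T q c σ y :=
            Finset.sum_congr rfl fun q _ => Finset.sum_congr rfl fun c _ => Finset.sum_comm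
        _ = ∑ q : Q, ∑ y : Fin n → A, ∑ c : C, ∑ σ : A, T q c σ y :=
            Finset.sum_congr rfl fun q _ => Finset.sum_comm
        _ = ∑ y : Fin n → A, ∑ q : Q, ∑ c : C, ∑ σ : A, T q c σ y := Finset.sum_comm
        _ = ∑ y : Fin n → A, ∑ c : C, ∑ σ : A, T ((List.ofFn y).foldl δ q0) c σ y := by
            refine Finset.sum_congr rfl fun y _ => ?_
            refine Finset.sum_eq_single_of_mem _ (Finset.mem_univ _) fun q _ hq => ?_
            refine Finset.sum_eq_zero fun c _ => Finset.sum_eq_zero fun σ _ => ?_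
            rw [hT]
            exact if_neg (by tauto)
        _ = ∑ y : Fin n → A, ∑ σ : A, ∑ c : C, T ((List.ofFn y).foldl δ q0) c σ y :=
            Finset.sum_congr rfl fun y _ => Finset.sum_comm
        _ = ∑ x : Fin (n+1) → A,
              if (List.ofFn x).foldl δ q0 = q' ∧ daaValue δ η q0 (List.ofFn x) = v'
              then lpAux φ c0 (List.ofFn x) c' else 0 := by
            rw [sum_snoc]
            refine Finset.sum_congr rfl fun y _ => Finset.sum_congr rfl fun σ _ => ?_
            rw [ofFn_snoc, List.foldl_append, daaValue_concat, lpAux_concat]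
            rw [List.foldl_cons, List.foldl_nil]
            by_cases h : δ ((List.ofFn y).foldl δ q0) σ = q'
            · by_cases hv : daaValue δ η q0 (List.ofFn y) + η q' = v'
              · rw [if_pos ⟨h, by rw [h]; exact hv⟩]
                refine Finset.sum_congr rfl fun c _ => ?_
                rw [hT]
                simp only
                split_ifs with hc
                · rfl
                · exact absurd ⟨⟨h, by omega⟩, by simp, by omega⟩ hc
              · rw [if_neg (by rintro ⟨-, h2⟩; rw [h] at h2; exact hv h2)]
                refine Finset.sum_eq_zero fun c _ => ?_
                rw [hT]
                refine if_neg ?_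
                rintro ⟨⟨-, h1⟩, -, h2⟩
                omega
            · rw [if_neg (by tauto)]
              refine Finset.sum_eq_zero fun c _ => ?_
              rw [hT]
              exact if_neg (by tauto)

end aux3

/-- The forward recursion computes the exact distribution of `value` on
random texts generated by a finite-memory text model: for all `n ≥ 0` and `v ∈ ℕ`,
`Σ_{q ∈ Q, c ∈ C} u_n(q,c,v) = Σ_{x ∈ Σ^n, value(x) = v} P_M(x)`. -/
theorem fwd_computes_value_distribution {A : Type*} [Fintype A] [DecidableEq A] [Nonempty A]
    {Q C : Type*} [Fintype Q] [DecidableEq Q] [Fintype C] [DecidableEq C]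
    (δ : Q → A → Q) (η : Q → ℕ) (q0 : Q) (c0 : C)
    (φ : C → A → C → ℝ)
    (hφ0 : ∀ c σ c', 0 ≤ φ c σ c' ∧ φ c σ c' ≤ 1)
    (hφ1 : ∀ c : C, (∑ σ : A, ∑ c' : C, φ c σ c') = 1)
    (n : ℕ) (v : ℕ) :
    (∑ q : Q, ∑ c : C, fwd δ η φ q0 c0 n q c v)
      = ∑ x : Fin n → A,
          (if daaValue δ η q0 (List.ofFn x) = v then textProb φ c0 x else 0) := by
  simp only [fwd_eq δ η φ q0 c0 n, textProb_eq_lpAux φ]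
  calc ∑ q : Q, ∑ c : C, ∑ x : Fin n → A,
          (if (List.ofFn x).foldl δ q0 = q ∧ daaValue δ η q0 (List.ofFn x) = v
          then lpAux φ c0 (List.ofFn x) c else 0)
      = ∑ q : Q, ∑ x : Fin n → A, ∑ c : C,
          (if (List.ofFn x).foldl δ q0 = q ∧ daaValue δ η q0 (List.ofFn x) = v
          then lpAux φ c0 (List.ofFn x) c else 0) :=
        Finset.sum_congr rfl fun q _ => Finset.sum_comm
    _ = ∑ x : Fin n → A, ∑ q : Q, ∑ c : C,
          (if (List.ofFn x).foldl δ q0 = q ∧ daaValue δ η q0 (List.ofFn x) = v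
          then lpAux φ c0 (List.ofFn x) c else 0) := Finset.sum_comm
    _ = ∑ x : Fin n → A,
          (if daaValue δ η q0 (List.ofFn x) = v then ∑ c' : C, lpAux φ c0 (List.ofFn x) c'
          else 0) := by
        refine Finset.sum_congr rfl fun x _ => ?_
        rw [Finset.sum_eq_single_of_mem ((List.ofFn x).foldl δ q0) (Finset.mem_univ _)
          (fun q _ hq => Finset.sum_eq_zero fun c _ => if_neg (by tauto))]
        by_cases hv : daaValue δ η q0 (List.ofFn x) = v
        · rw [if_pos hv]
          refine Finset.sum_congr rfl fun c _ => ?_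
          split_ifs with hc
          · rfl
          · exact absurd ⟨rfl, hv⟩ hc
        · rw [if_neg hv]
          exact Finset.sum_eq_zero fun c _ => if_neg (by tauto)
end
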